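/- Let X ⊆ P(V) be a nondegenerate closed subscheme over a field whose homogeneous ideal I_X is generated by quadrics, and suppose X admits a p-th linear syzygy s of rank p+1 (the minimal possible rank). Then X is reducible. -/

import Mathlib

noncomputable section

open MvPolynomial

/-- The linear form on `P^{n-1}` with coefficient vector `c`. -/
def linF {K : Type*} [Field K] {n : ℕ} (c : Fin n → K) : MvPolynomial (Fin n) K :=
  ∑ i, C (c i) * X i

/-- The `j`-th coordinate covector on `V = Kⁿ`. -/
def coord {K : Type*} [Field K] {n : ℕ} (j : Fin n) :
    Module.Dual K (Fin n → K) :=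
  LinearMap.proj j

/-- A `p`-th linear syzygy of `X ⊆ P(V)` is an element of
`ker (Λᵖ V ⊗ (I_X)₂ → Λ^{p-1} V ⊗ (I_X)₃)` (Koszul cohomology).  We encode an element of
`Λᵖ V ⊗ R` (`V = Kⁿ`, `R` the polynomial ring) as an alternating map `S : (V*)ᵖ → R`, and
the Koszul cocycle condition as: for all `(p-1)`-tuples `ψ` of covectors,
`∑ⱼ Xⱼ · S(coord j, ψ) = 0`. -/
def IsKoszulCocycle {K : Type*} [Field K] {n p : ℕ}
    (S : (Module.Dual K (Fin n → K)) [⋀^Fin p]→ₗ[K] MvPolynomial (Fin n) K) : Prop :=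
  ∀ (h : p = (p - 1) + 1) (ψ : Fin (p - 1) → Module.Dual K (Fin n → K)),
    ∑ j : Fin n, X j * S ((Fin.cons (coord j) ψ) ∘ Fin.cast h) = 0

/-- `S` (an element of `Λᵖ V ⊗ R`) lies in `Λᵖ L ⊗ R` for a subspace `L ⊆ V`: in the dual
encoding this means `S` vanishes on every tuple one of whose entries annihilates `L`.
The *rank* of a syzygy is the least dimension of such an `L`, and `L_s` is the
corresponding space of linear forms involved in `S`. -/
def SupportedOn {K : Type*} [Field K] {n p : ℕ}
    (S : (Module.Dual K (Fin n → K)) [⋀^Fin p]→ₗ[K] MvPolynomial (Fin n) K)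
    (L : Submodule K (Fin n → K)) : Prop :=
  ∀ φ : Module.Dual K (Fin n → K), (∀ v ∈ L, φ v = 0) →
    ∀ ψ : Fin p → Module.Dual K (Fin n → K), (∃ i, ψ i = φ) → S ψ = 0

/-- The syzygy `S` has rank `r`: `r` is the least dimension of a subspace of linear forms
supporting `S`. -/
def HasRank {K : Type*} [Field K] {n p : ℕ}
    (S : (Module.Dual K (Fin n → K)) [⋀^Fin p]→ₗ[K] MvPolynomial (Fin n) K)
    (r : ℕ) : Prop :=
  IsLeast {m | ∃ L : Submodule K (Fin n → K),
    SupportedOn S L ∧ Module.finrank K L = m} r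

section Lemmas

variable {K : Type*} [Field K] {n p : ℕ}

lemma coeff_linF (c : Fin n → K) (i : Fin n) :
    coeff (Finsupp.single i 1) (linF c) = c i := by
  rw [linF, MvPolynomial.coeff_sum, Finset.sum_eq_single i]
  · simp [coeff_C_mul, MvPolynomial.coeff_X]
  · intro j _ hj
    rw [coeff_C_mul, MvPolynomial.coeff_X']
    rw [if_neg (fun h => hj (Finsupp.single_left_injective one_ne_zero h))]
    ring
  · simp

lemma linF_eq_zero {c : Fin n → K} (h : linF c = 0) : c = 0 := by
  funext i
  have := coeff_linF c i
  rw [h] at this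
  simpa using this.symm

lemma linF_inj {c d : Fin n → K} (h : linF c = linF d) : c = d := by
  funext i
  have h1 := coeff_linF c i
  have h2 := coeff_linF d i
  rw [h] at h1; rw [h1] at h2; exact h2

lemma linF_smul (k : K) (c : Fin n → K) : linF (k • c) = C k * linF c := by
  simp [linF, Finset.mul_sum, mul_assoc]

lemma linF_add (a b : Fin n → K) : linF (a + b) = linF a + linF b := by
  simp [linF, add_mul, Finset.sum_add_distrib]

lemma linF_single (j : Fin n) (k : K) : linF (Pi.single j k) = C k * X j := by
  rw [linF, Finset.sum_eq_single j]
  · simp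
  · intro i _ hij; simp [Pi.single_eq_of_ne hij]
  · simp

lemma linF_isHomogeneous (c : Fin n → K) : (linF c).IsHomogeneous 1 := by
  apply MvPolynomial.IsHomogeneous.sum
  intro i _
  simpa using (MvPolynomial.isHomogeneous_X K i).C_mul (c i)

lemma aeval_linF (g : Fin n → MvPolynomial (Fin n) K) (d : Fin n → K) :
    aeval g (linF d) = ∑ i, C (d i) * g i := by
  rw [linF, map_sum]
  refine Finset.sum_congr rfl fun i _ => ?_
  rw [map_mul, aeval_X, aeval_C]
  rfl

lemma prime_X_mv (j : Fin n) : Prime (X j : MvPolynomial (Fin n) K) := by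
  rcases n with _ | m
  · exact absurd j.2 (by simp)
  · have h0 : Prime (X (0 : Fin (m+1)) : MvPolynomial (Fin (m+1)) K) := by
      rw [← MulEquiv.prime_iff (MvPolynomial.finSuccEquiv K m).toMulEquiv]
      have : (MvPolynomial.finSuccEquiv K m).toMulEquiv (X 0) = Polynomial.X := by
        simpa using MvPolynomial.finSuccEquiv_X_zero (R := K) (n := m)
      rw [this]
      exact Polynomial.prime_X
    rw [← MulEquiv.prime_iff (MvPolynomial.renameEquiv K (Equiv.swap j 0)).toMulEquiv]
    have : (MvPolynomial.renameEquiv K (Equiv.swap j 0)).toMulEquiv (X j)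
        = X (0 : Fin (m+1)) := by
      simp [MvPolynomial.renameEquiv_apply, Equiv.swap_apply_left]
    rw [this]
    exact h0

lemma prime_linF {c : Fin n → K} (hc : c ≠ 0) : Prime (linF c) := by
  obtain ⟨j0, hj0⟩ : ∃ j0, c j0 ≠ 0 := by
    by_contra h; push_neg at h; exact hc (funext h)
  classical
  set c' : Fin n → K := Function.update c j0 0 with hc'
  have hsum : Pi.single j0 (c j0) + c' = c := by
    funext i
    by_cases hij : i = j0
    · subst hij; simp [hc']
    · simp [hc', Pi.single_eq_of_ne hij, Function.update_of_ne hij]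
  have hcc' : linF c = C (c j0) * X j0 + linF c' := by
    have h := congrArg linF hsum
    rw [linF_add, linF_single] at h
    exact h.symm
  set Ggen : Fin n → MvPolynomial (Fin n) K :=
    fun j => if j = j0 then linF c else X j with hGgen
  set Fgen : Fin n → MvPolynomial (Fin n) K :=
    fun j => if j = j0 then C (c j0)⁻¹ * (X j0 - linF c') else X j with hFgen
  have hG0 : Ggen j0 = linF c := by simp [hGgen]
  have hF0 : Fgen j0 = C (c j0)⁻¹ * (X j0 - linF c') := by simp [hFgen]
  have hGc' : aeval Ggen (linF c') = linF c' := by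
    rw [aeval_linF, linF]
    refine Finset.sum_congr rfl fun i _ => ?_
    by_cases hij : i = j0
    · subst hij; simp [hc']
    · simp [hGgen, hij]
  have hFc' : aeval Fgen (linF c') = linF c' := by
    rw [aeval_linF, linF]
    refine Finset.sum_congr rfl fun i _ => ?_
    by_cases hij : i = j0
    · subst hij; simp [hc']
    · simp [hFgen, hij]
  have hGF : (aeval Ggen).comp (aeval Fgen) = AlgHom.id K (MvPolynomial (Fin n) K) := by
    apply MvPolynomial.algHom_ext
    intro i
    simp only [AlgHom.comp_apply, aeval_X, AlgHom.id_apply]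
    by_cases hij : i = j0
    · subst hij
      rw [hF0, map_mul, map_sub, aeval_X, aeval_C, hG0, hGc', hcc', algebraMap_eq]
      ring_nf
      rw [← C_mul, inv_mul_cancel₀ hj0]
      simp
    · have h1 : Fgen i = X i := by simp [hFgen, hij]
      have h2 : Ggen i = X i := by simp [hGgen, hij]
      rw [h1, aeval_X, h2]
  have hFG : (aeval Fgen).comp (aeval Ggen) = AlgHom.id K (MvPolynomial (Fin n) K) := by
    apply MvPolynomial.algHom_ext
    intro i
    simp only [AlgHom.comp_apply, aeval_X, AlgHom.id_apply]
    by_cases hij : i = j0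
    · subst hij
      rw [hG0, hcc', map_add, map_mul, aeval_X, aeval_C, hFc', hF0, algebraMap_eq,
          ← mul_assoc, ← C_mul, mul_inv_cancel₀ hj0]
      simp
    · have h1 : Fgen i = X i := by simp [hFgen, hij]
      have h2 : Ggen i = X i := by simp [hGgen, hij]
      rw [h2, aeval_X, h1]
  let e : MvPolynomial (Fin n) K ≃ₐ[K] MvPolynomial (Fin n) K :=
    AlgEquiv.ofAlgHom (aeval Ggen) (aeval Fgen) hGF hFG
  have he : e.toMulEquiv (X j0) = linF c := by
    show aeval Ggen (X j0) = linF c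
    rw [aeval_X, hG0]
  rw [← he, MulEquiv.prime_iff e.toMulEquiv]
  exact prime_X_mv j0

lemma homog_cancel {l m : MvPolynomial (Fin n) K} (hl : l.IsHomogeneous 1) (hl0 : l ≠ 0)
    (d : ℕ) (h : (l * m).IsHomogeneous (d + 1)) : m.IsHomogeneous d := by
  classical
  have hcomp : ∀ k : ℕ, k ≠ d → homogeneousComponent k m = 0 := by
    intro k hk
    have hmul : l * m = ∑ i ∈ Finset.range (m.totalDegree + 1),
        l * homogeneousComponent i m := by
      rw [← Finset.mul_sum, sum_homogeneousComponent]
    have happ := congrArg (homogeneousComponent (k + 1)) hmul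
    have hL : homogeneousComponent (k + 1) (l * m) = 0 := by
      rw [homogeneousComponent_of_mem ((mem_homogeneousSubmodule _ _).mpr h)]
      rw [if_neg (by omega)]
    by_cases hkr : k ∈ Finset.range (m.totalDegree + 1)
    · rw [hL, map_sum] at happ
      have hterm : ∀ i ∈ Finset.range (m.totalDegree + 1),
          homogeneousComponent (k + 1) (l * homogeneousComponent i m)
            = if i = k then l * homogeneousComponent i m else 0 := by
        intro i _
        have hi : (l * homogeneousComponent i m).IsHomogeneous (1 + i) :=
          hl.mul (homogeneousComponent_isHomogeneous i m)
        rw [homogeneousComponent_of_mem ((mem_homogeneousSubmodule _ _).mpr hi)]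
        by_cases hik : i = k
        · subst hik; simp [Nat.add_comm]
        · rw [if_neg (by omega), if_neg hik]
      rw [Finset.sum_congr rfl hterm, Finset.sum_ite_eq' _ k] at happ
      rw [if_pos hkr] at happ
      rcases mul_eq_zero.mp happ.symm with h0 | h0
      · exact absurd h0 hl0
      · exact h0
    · apply homogeneousComponent_eq_zero
      simp only [Finset.mem_range, not_lt] at hkr
      omega
  have hm : m = homogeneousComponent d m := by
    conv_lhs => rw [← sum_homogeneousComponent m]
    rw [Finset.sum_congr rfl (fun i (_ : i ∈ Finset.range (m.totalDegree+1)) => by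
      by_cases hid : i = d
      · subst hid; rw [if_pos rfl]
      · rw [hcomp i hid, if_neg hid]
      : ∀ i ∈ Finset.range (m.totalDegree+1), homogeneousComponent i m
          = if i = d then homogeneousComponent d m else 0)]
    rw [Finset.sum_ite_eq' _ d]
    by_cases hdr : d ∈ Finset.range (m.totalDegree + 1)
    · rw [if_pos hdr]
    · rw [if_neg hdr]
      apply (homogeneousComponent_eq_zero _ _ _).symm
      simp only [Finset.mem_range, not_lt] at hdr
      omega
  rw [hm]
  exact homogeneousComponent_isHomogeneous d m

lemma homog_zero_eq_C {q : MvPolynomial (Fin n) K} (h : q.IsHomogeneous 0) :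
    ∃ u : K, q = C u := by
  refine ⟨coeff 0 q, ?_⟩
  ext d
  by_cases hd : d = 0
  · subst hd; simp
  · rw [coeff_C, if_neg (fun hh => hd hh.symm)]
    exact h.coeff_eq_zero (by rwa [Ne, Finsupp.degree_eq_zero_iff])

lemma finsupp_degree_one {d : Fin n →₀ ℕ} (hd : d.degree = 1) :
    ∃ i, d = Finsupp.single i 1 := by
  have hne : d ≠ 0 := by
    intro h0; rw [h0, (Finsupp.degree_eq_zero_iff (0 : Fin n →₀ ℕ)).mpr rfl] at hd; exact one_ne_zero hd.symm
  obtain ⟨i, hi⟩ := Finsupp.ne_iff.mp hne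
  simp only [Finsupp.coe_zero, Pi.zero_apply] at hi
  refine ⟨i, ?_⟩
  have hisup : i ∈ d.support := Finsupp.mem_support_iff.mpr hi
  have hdeg : d.degree = ∑ j ∈ d.support, d j := rfl
  have hdi : d i = 1 := by
    have hle : d i ≤ 1 := by
      rw [← hd, hdeg]
      exact Finset.single_le_sum (fun j _ => Nat.zero_le _) hisup
    omega
  ext j
  by_cases hji : j = i
  · subst hji; simp [hdi]
  · rw [Finsupp.single_apply, if_neg (fun hh => hji hh.symm)]
    by_contra hj
    have hjsup : j ∈ d.support := Finsupp.mem_support_iff.mpr hj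
    have : d i + d j ≤ d.degree := by
      rw [hdeg]
      have hj2 : j ∈ d.support.erase i := Finset.mem_erase.mpr ⟨hji, hjsup⟩
      have h1 := Finset.add_sum_erase _ d hisup
      have h2 := Finset.single_le_sum (fun k (_ : k ∈ d.support.erase i) => Nat.zero_le (d k)) hj2
      omega
    omega

lemma homog_one_eq_linF {q : MvPolynomial (Fin n) K} (h : q.IsHomogeneous 1) :
    ∃ c : Fin n → K, q = linF c := by
  refine ⟨fun i => coeff (Finsupp.single i 1) q, ?_⟩
  ext d
  by_cases hd : d.degree = 1
  · obtain ⟨i, rfl⟩ := finsupp_degree_one hd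
    rw [coeff_linF]
  · rw [h.coeff_eq_zero hd, (linF_isHomogeneous _).coeff_eq_zero hd]

variable {S : (Module.Dual K (Fin n → K)) [⋀^Fin p]→ₗ[K] MvPolynomial (Fin n) K}
  {L : Submodule K (Fin n → K)}

lemma S_update (hsup : SupportedOn S L)
    (m : Fin p → Module.Dual K (Fin n → K)) (r : Fin p)
    (χ χ' : Module.Dual K (Fin n → K)) (hagree : ∀ x ∈ L, χ x = χ' x) :
    S (Function.update m r χ) = S (Function.update m r χ') := by
  classical
  have h0 : S (Function.update m r (χ - χ')) = 0 := by
    refine hsup (χ - χ') (fun x hx => ?_) _ ⟨r, Function.update_self _ _ _⟩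
    simp [hagree x hx]
  rw [S.map_update_sub] at h0
  exact sub_eq_zero.mp h0

lemma S_congr (hsup : SupportedOn S L)
    (ψ ψ' : Fin p → Module.Dual K (Fin n → K))
    (h : ∀ t, ∀ x ∈ L, ψ t x = ψ' t x) : S ψ = S ψ' := by
  classical
  suffices H : ∀ k : ℕ, k ≤ p →
      S (fun t => if (t : ℕ) < k then ψ' t else ψ t) = S ψ by
    have := H p le_rfl
    simpa [Fin.is_lt] using this.symm
  intro k
  induction k with
  | zero => intro _; simp
  | succ k ih =>
    intro hk
    have hkp : k < p := hk
    set tk : Fin p := ⟨k, hkp⟩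
    have hfun : (fun t : Fin p => if (t : ℕ) < k + 1 then ψ' t else ψ t)
        = Function.update (fun t : Fin p => if (t : ℕ) < k then ψ' t else ψ t) tk (ψ' tk) := by
      funext t
      by_cases ht : t = tk
      · subst ht; simp [Function.update_self, tk]
      · have htk : (t : ℕ) ≠ k := fun hh => ht (Fin.ext hh)
        rw [Function.update_of_ne ht]
        by_cases hlt : (t : ℕ) < k
        · rw [if_pos (by omega), if_pos hlt]
        · rw [if_neg (by omega), if_neg hlt]
    rw [hfun]
    have hupd : S (Function.update (fun t : Fin p => if (t : ℕ) < k then ψ' t else ψ t) tk (ψ' tk))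
        = S (Function.update (fun t : Fin p => if (t : ℕ) < k then ψ' t else ψ t) tk (ψ tk)) :=
      S_update hsup _ _ _ _ (fun x hx => (h tk x hx).symm)
    rw [hupd]
    have heq : Function.update (fun t : Fin p => if (t : ℕ) < k then ψ' t else ψ t) tk (ψ tk)
        = (fun t : Fin p => if (t : ℕ) < k then ψ' t else ψ t) := by
      have : ψ tk = (fun t : Fin p => if (t : ℕ) < k then ψ' t else ψ t) tk := by simp [tk]
      rw [this, Function.update_eq_self]
    rw [heq]
    exact ih (le_of_lt hk)

end Lemmas

/-- **A `p`-th linear syzygy of the minimal possible rank `p+1` forces reducibility.**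
Let `X ⊆ P(V)` be a nondegenerate closed subscheme whose homogeneous ideal `I` is
generated by quadrics, admitting a nonzero `p`-th linear syzygy `S` of rank `p+1`.
Then `X` is reducible (its radical ideal is not prime). -/
theorem reducible_of_rank_p_add_one_syzygy {K : Type*} [Field K] {n p : ℕ}
    (I : Ideal (MvPolynomial (Fin n) K))
    (hquad : I = Ideal.span {q | q ∈ I ∧ q.IsHomogeneous 2})
    (hnondeg : ∀ c : Fin n → K, linF c ∈ I.radical → c = 0)
    (S : (Module.Dual K (Fin n → K)) [⋀^Fin p]→ₗ[K] MvPolynomial (Fin n) K)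
    (hval : ∀ ψ, S ψ ∈ I ∧ (S ψ).IsHomogeneous 2)
    (hkos : IsKoszulCocycle S) (hS : S ≠ 0) (hrank : HasRank S (p + 1)) :
    ¬ (I.radical).IsPrime := by
  classical
  intro hP
  obtain ⟨⟨L, hsup, hdim⟩, hleast⟩ := hrank
  rcases Nat.eq_zero_or_pos p with hp0 | hppos
  · subst hp0
    have h0 : (0:ℕ) ∈ {m | ∃ L' : Submodule K (Fin n → K),
        SupportedOn S L' ∧ Module.finrank K L' = m} := by
      refine ⟨⊥, fun φ hφ ψ hex => ?_, by simp⟩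
      obtain ⟨i, _⟩ := hex
      exact i.elim0
    have := hleast h0
    omega
  -- Basis of L and dual family
  have hfinL : Module.Finite K L := inferInstance
  let b : Module.Basis (Fin (p+1)) K L := Module.finBasisOfFinrankEq K L hdim
  let v : Fin (p+1) → (Fin n → K) := fun k => (b k : Fin n → K)
  have hvL : ∀ k, v k ∈ L := fun k => (b k).2
  have hvli : LinearIndependent K v := by
    have := b.linearIndependent.map' L.subtype (Submodule.ker_subtype L)
    exact this
  have hvne : ∀ k, v k ≠ 0 := fun k => hvli.ne_zero k
  obtain ⟨Lc, hLc⟩ := Submodule.exists_isCompl L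
  let pr : (Fin n → K) →ₗ[K] L := Submodule.linearProjOfIsCompl L Lc hLc
  let φ : Fin (p+1) → Module.Dual K (Fin n → K) := fun k => (b.coord k).comp pr
  have hφv : ∀ k l, φ k (v l) = if l = k then 1 else 0 := by
    intro k l
    show (b.coord k) (pr (v l)) = _
    have : pr (v l) = b l := Submodule.linearProjOfIsCompl_apply_left hLc (b l)
    rw [this, Module.Basis.coord_apply, b.repr_self]
    exact Finsupp.single_apply
  have hLspan : L = Submodule.span K (Set.range v) := by
    have h1 : Set.range v = L.subtype '' Set.range b := by
      rw [← Set.range_comp]; rfl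
    rw [h1, ← Submodule.map_span, b.span_eq, Submodule.map_top, Submodule.range_subtype]
  have hagree : ∀ (χ χ' : Module.Dual K (Fin n → K)),
      (∀ l, χ (v l) = χ' (v l)) → ∀ x ∈ L, χ x = χ' x := by
    intro χ χ' hvv x hx
    rw [hLspan] at hx
    induction hx using Submodule.span_induction with
    | mem y hy => obtain ⟨l, rfl⟩ := hy; exact hvv l
    | zero => simp
    | add y z _ _ hy hz => simp [map_add, hy, hz]
    | smul c y _ hy => simp [map_smul, hy]
  have hsum_phi : ∀ (w : Fin (p+1) → K) (l : Fin (p+1)),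
      (∑ k, w k • φ k) (v l) = w l := by
    intro w l
    simp only [LinearMap.sum_apply, LinearMap.smul_apply, hφv, smul_eq_mul, mul_ite,
      mul_one, mul_zero]
    rw [Finset.sum_ite_eq Finset.univ l w]
    simp
  -- Step 1: find an injective a with S (φ ∘ a) ≠ 0
  have hstep1 : ∃ a : Fin p → Fin (p+1), Function.Injective a ∧ S (φ ∘ a) ≠ 0 := by
    by_contra hcon
    push_neg at hcon
    apply hS
    refine AlternatingMap.ext fun ψ => ?_
    rw [AlternatingMap.zero_apply]
    let c : Fin p → Fin (p+1) → K := fun t k => ψ t (v k)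
    have h1 : S ψ = S (fun t => ∑ k, c t k • φ k) := by
      refine S_congr hsup _ _ (fun t x hx => ?_)
      refine hagree _ _ (fun l => ?_) x hx
      rw [hsum_phi]
    rw [h1]
    have h2 : S (fun t => ∑ k : Fin (p+1), c t k • φ k)
        = ∑ r : Fin p → Fin (p+1), S (fun t => c t (r t) • φ (r t)) := by
      exact S.toMultilinearMap.map_sum (fun t k => c t k • φ k)
    rw [h2]
    refine Finset.sum_eq_zero (fun r _ => ?_)
    have h3 : S (fun t => c t (r t) • φ (r t)) = (∏ t, c t (r t)) • S (φ ∘ r) :=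
      S.toMultilinearMap.map_smul_univ (fun t => c t (r t)) (φ ∘ r)
    rw [h3]
    by_cases hinj : Function.Injective r
    · rw [hcon r hinj, smul_zero]
    · have h4 : S (φ ∘ r) = 0 :=
        S.map_eq_zero_of_not_injective _ (fun hinjc => hinj (fun t1 t2 ht =>
          hinjc (congrArg φ ht)))
      rw [h4, smul_zero]
  obtain ⟨a, ainj, hA0⟩ := hstep1
  -- Step 2: the missed index i'
  have hcard : (Finset.univ.image a).card = p := by
    rw [Finset.card_image_of_injective _ ainj, Finset.card_univ, Fintype.card_fin]
  obtain ⟨i', hi'mem⟩ : ∃ i', i' ∉ Finset.univ.image a := by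
    by_contra hcon
    push_neg at hcon
    have : Finset.univ.image a = Finset.univ := Finset.eq_univ_iff_forall.mpr hcon
    have := congrArg Finset.card this
    rw [hcard, Finset.card_univ, Fintype.card_fin] at this
    omega
  have hi' : ∀ t, a t ≠ i' := fun t ht =>
    hi'mem (Finset.mem_image.mpr ⟨t, Finset.mem_univ t, ht⟩)
  have hins : insert i' (Finset.univ.image a) = Finset.univ := by
    apply Finset.eq_univ_of_card
    simp [Finset.card_insert_of_notMem hi'mem, hcard]
  -- Step 3: Koszul relation
  have h1p : p = (p - 1) + 1 := (Nat.succ_pred_eq_of_pos hppos).symm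
  let r₀ : Fin p := Fin.cast h1p.symm 0
  let ψK : Fin (p-1) → Module.Dual K (Fin n → K) :=
    fun t => φ (a (Fin.cast h1p.symm t.succ))
  have hkos0 := hkos h1p ψK
  have htuple : ∀ χ : Module.Dual K (Fin n → K),
      (Fin.cons χ ψK) ∘ Fin.cast h1p = Function.update (φ ∘ a) r₀ χ := by
    intro χ
    funext r
    have hr₀val : (r₀ : ℕ) = 0 := rfl
    by_cases hr0 : (r : ℕ) = 0
    · have hr : r = r₀ := Fin.ext (by omega)
      rw [hr, Function.update_self, Function.comp_apply]
      have hc : Fin.cast h1p r₀ = 0 := Fin.ext (by simpa using hr₀val)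
      rw [hc, Fin.cons_zero]
    · have hr : r ≠ r₀ := fun h => hr0 (by rw [h]; exact hr₀val)
      rw [Function.comp_apply, Function.update_of_ne hr]
      have hrp : (r : ℕ) - 1 < p - 1 := by have := r.2; omega
      set t : Fin (p-1) := ⟨(r : ℕ) - 1, hrp⟩ with htdef
      have hc : Fin.cast h1p r = t.succ := Fin.ext (by simp [htdef]; omega)
      rw [hc, Fin.cons_succ]
      show φ (a (Fin.cast h1p.symm t.succ)) = (φ ∘ a) r
      have hc2 : Fin.cast h1p.symm t.succ = r := Fin.ext (by simp [htdef]; omega)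
      rw [hc2, Function.comp_apply]
  set A := S (φ ∘ a) with hA
  set B := S (Function.update (φ ∘ a) r₀ (φ i')) with hB
  have hterm : ∀ j : Fin n, S (Function.update (φ ∘ a) r₀ (coord j))
      = v (a r₀) j • A + v i' j • B := by
    intro j
    have e1 : S (Function.update (φ ∘ a) r₀ (coord j))
        = S (Function.update (φ ∘ a) r₀ (∑ k, (fun k => v k j) k • φ k)) := by
      refine S_update hsup _ _ _ _ (fun x hx => ?_)
      refine hagree _ _ (fun l => ?_) x hx
      rw [hsum_phi]
      rfl
    rw [e1]
    have e2 : S (Function.update (φ ∘ a) r₀ (∑ k, (fun k => v k j) k • φ k))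
        = ∑ k, S (Function.update (φ ∘ a) r₀ ((fun k => v k j) k • φ k)) :=
      S.toMultilinearMap.map_update_sum Finset.univ r₀ _ _
    rw [e2]
    have e3 : ∀ k, S (Function.update (φ ∘ a) r₀ ((v k j) • φ k))
        = v k j • S (Function.update (φ ∘ a) r₀ (φ k)) := fun k =>
      S.toMultilinearMap.map_update_smul _ r₀ _ _
    simp only [e3]
    rw [← Finset.sum_subset (Finset.subset_univ ({a r₀, i'} : Finset (Fin (p+1))))]
    · rw [Finset.sum_pair (hi' r₀)]
      congr 1
      · congr 1
        have : Function.update (φ ∘ a) r₀ (φ (a r₀)) = φ ∘ a := by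
          have h := Function.update_eq_self r₀ (φ ∘ a)
          exact h
        rw [this]
    · intro k _ hk
      simp only [Finset.mem_insert, Finset.mem_singleton] at hk
      push_neg at hk
      obtain ⟨hk1, hk2⟩ := hk
      have hkim : k ∈ Finset.univ.image a := by
        have : k ∈ insert i' (Finset.univ.image a) := hins ▸ Finset.mem_univ k
        rcases Finset.mem_insert.mp this with h | h
        · exact absurd h hk2
        · exact h
      obtain ⟨t, _, ht⟩ := Finset.mem_image.mp hkim
      have htr : t ≠ r₀ := by
        intro hh; apply hk1; rw [← ht, hh]
      have hval0 : Function.update (φ ∘ a) r₀ (φ k) r₀ = φ k :=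
        Function.update_self _ _ _
      have hvalt : Function.update (φ ∘ a) r₀ (φ k) t = φ k := by
        rw [Function.update_of_ne htr, Function.comp_apply, ht]
      have hz : S (Function.update (φ ∘ a) r₀ (φ k)) = 0 :=
        S.map_eq_zero_of_eq _ (hval0.trans hvalt.symm) (Ne.symm htr)
      rw [hz, smul_zero]
  have hrel : linF (v (a r₀)) * A + linF (v i') * B = 0 := by
    have hterms : ∀ j : Fin n, X j * S ((Fin.cons (coord j) ψK) ∘ Fin.cast h1p)
        = C (v (a r₀) j) * X j * A + C (v i' j) * X j * B := by
      intro j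
      rw [htuple (coord j), hterm j, smul_eq_C_mul, smul_eq_C_mul]
      ring
    rw [Finset.sum_congr rfl (fun j _ => hterms j)] at hkos0
    unfold linF
    rw [Finset.sum_mul, Finset.sum_mul, ← Finset.sum_add_distrib]
    exact hkos0
  -- Step 4: conclusion
  have hAI := (hval (φ ∘ a)).1
  have hAh := (hval (φ ∘ a)).2
  have hlne : linF (v i') ≠ 0 := fun h => hvne i' (linF_eq_zero h)
  have hl'ne : linF (v (a r₀)) ≠ 0 := fun h => hvne _ (linF_eq_zero h)
  have hprime : Prime (linF (v i')) := prime_linF (hvne i')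
  have hdvd : linF (v i') ∣ linF (v (a r₀)) * A := ⟨-B, by linear_combination hrel⟩
  have hnd : ¬ linF (v i') ∣ linF (v (a r₀)) := by
    rintro ⟨g, hg⟩
    have hgh : g.IsHomogeneous 0 := by
      refine homog_cancel (linF_isHomogeneous (v i')) hlne 0 ?_
      rw [← hg]
      exact linF_isHomogeneous (v (a r₀))
    obtain ⟨u, rfl⟩ := homog_zero_eq_C hgh
    have heq : linF (v (a r₀)) = linF (u • v i') := by
      rw [linF_smul, hg]; ring
    have hveq : v (a r₀) = u • v i' := linF_inj heq
    have hne : a r₀ ≠ i' := hi' r₀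
    have hg : Function.Injective ![a r₀, i'] := by
      intro x y hxy
      fin_cases x <;> fin_cases y <;>
        first
          | rfl
          | (exfalso; apply hne; simpa using hxy)
          | (exfalso; apply hne; simpa using hxy.symm)
    have h2 := hvli.comp ![a r₀, i'] hg
    have h3 : v ∘ ![a r₀, i'] = ![v (a r₀), v i'] := by
      funext x; fin_cases x <;> rfl
    rw [h3, linearIndependent_fin2] at h2
    exact h2.2 u (by
      simp only [Matrix.cons_val_one, Matrix.head_cons, Matrix.cons_val_zero]
      exact hveq.symm)
  have hdA : linF (v i') ∣ A := (hprime.2.2 _ _ hdvd).resolve_left hnd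
  obtain ⟨m, hm⟩ := hdA
  have hmh : m.IsHomogeneous 1 := by
    refine homog_cancel (linF_isHomogeneous (v i')) hlne 1 ?_
    rw [← hm]
    exact hAh
  obtain ⟨cm, rfl⟩ := homog_one_eq_linF hmh
  have hArad : A ∈ I.radical := Ideal.le_radical hAI
  rw [hm] at hArad
  rcases hP.mem_or_mem hArad with hl | hr
  · exact hvne i' (hnondeg _ hl)
  · have hcm := hnondeg cm hr
    rw [hcm] at hm
    have : linF (0 : Fin n → K) = 0 := by simp [linF]
    rw [this, mul_zero] at hm
    exact hA0 hm
end
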